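/- arXiv:2110.03992 — 7 statements merged into one kernel-verified Lean document; each statement's English description precedes it below -/
import Mathlib

section
/- Let $A_1,\dots,A_k$ and $B_1,\dots,B_k$ be $n\times n$ matrices over a commutative ring such that $B_iB_j = B_jB_i$ for all $i,j$ and $A_1B_1 + \cdots + A_kB_k = 0$. Define the polynomial $p(x_1,\dots,x_k) = \det(A_1x_1 + \cdots + A_kx_k)$ in commuting indeterminates. Then the matrix obtained by substituting $B_i$ for $x_i$ in $p$ (expanding $p$ as a sum of monomials and replacing each monomial $x_1^{e_1}\cdots x_k^{e_k}$ by $B_1^{e_1}\cdots B_k^{e_k}$) is the zero matrix. -/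
open MvPolynomial

/-- The polynomial `p(x₁,…,x_k) = det(A₁x₁ + ⋯ + A_k x_k)`. -/
noncomputable def phillipsPoly {R : Type*} [CommRing R] {n k : ℕ}
    (A : Fin k → Matrix (Fin n) (Fin n) R) : MvPolynomial (Fin k) R :=
  Matrix.det (∑ i, (MvPolynomial.X i : MvPolynomial (Fin k) R) • (A i).map MvPolynomial.C)

/-- Substitution of matrices `B i` for the variables `x i` in a multivariate polynomial:
each monomial `x₁^{e₁} ⋯ x_k^{e_k}` is replaced by the ordered product `B₁^{e₁} ⋯ B_k^{e_k}`. -/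
noncomputable def matSubst {R : Type*} [CommRing R] {n k : ℕ}
    (p : MvPolynomial (Fin k) R) (B : Fin k → Matrix (Fin n) (Fin n) R) :
    Matrix (Fin n) (Fin n) R :=
  ∑ m ∈ p.support, p.coeff m • ((List.finRange k).map fun i => B i ^ m i).prod

section Aux
variable {R : Type*} [CommRing R] {n k : ℕ} (B : Fin k → Matrix (Fin n) (Fin n) R)

noncomputable def Bpow (m : Fin k →₀ ℕ) : Matrix (Fin n) (Fin n) R :=
  ((List.finRange k).map fun i => B i ^ m i).prod

lemma Bpow_list_add (hB : ∀ i j, B i * B j = B j * B i) (m m' : Fin k →₀ ℕ) :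
    ∀ l : List (Fin k), (l.map fun j => B j ^ (m + m') j).prod =
      (l.map fun j => B j ^ m j).prod * (l.map fun j => B j ^ m' j).prod := by
  have hC : ∀ i j, Commute (B i) (B j) := hB
  intro l
  induction l with
  | nil => simp
  | cons a t ih =>
    have hc : Commute (B a ^ m' a) ((t.map fun j => B j ^ m j).prod) := by
      apply Commute.list_prod_right
      intro x hx
      simp only [List.mem_map] at hx
      obtain ⟨j, -, rfl⟩ := hx
      exact (hC a j).pow_pow _ _
    simp only [List.map_cons, List.prod_cons]
    rw [ih, Finsupp.add_apply, pow_add]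
    exact hc.mul_mul_mul_comm _ _

lemma Bpow_add (hB : ∀ i j, B i * B j = B j * B i) (m m' : Fin k →₀ ℕ) :
    Bpow B (m + m') = Bpow B m * Bpow B m' :=
  Bpow_list_add B hB m m' _

lemma Bpow_single (i : Fin k) : Bpow B (Finsupp.single i 1) = B i := by
  unfold Bpow
  rw [List.prod_map_eq_pow_single i _ (fun j hj _ => by
    rw [Finsupp.single_eq_of_ne' (Ne.symm hj), pow_zero]),
    List.count_eq_one_of_mem (List.nodup_finRange k) (List.mem_finRange i)]
  simp

lemma commute_Bpow (hB : ∀ i j, B i * B j = B j * B i) (i : Fin k) (m : Fin k →₀ ℕ) :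
    Commute (B i) (Bpow B m) := by
  have hC : ∀ i j, Commute (B i) (B j) := hB
  apply Commute.list_prod_right
  intro x hx
  simp only [List.mem_map] at hx
  obtain ⟨j, -, rfl⟩ := hx
  exact (hC i j).pow_right _

lemma matSubst_def (p : MvPolynomial (Fin k) R) :
    matSubst p B = ∑ m ∈ p.support, p.coeff m • Bpow B m := rfl

lemma matSubst_zero : matSubst 0 B = 0 := by simp [matSubst_def]

lemma matSubst_add (p q : MvPolynomial (Fin k) R) :
    matSubst (p + q) B = matSubst p B + matSubst q B := by
  classical
  have hs : ∀ (r : MvPolynomial (Fin k) R) (s : Finset (Fin k →₀ ℕ)), r.support ⊆ s →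
      matSubst r B = ∑ m ∈ s, r.coeff m • Bpow B m := fun r s h =>
    Finset.sum_subset h (fun m _ hm => by rw [notMem_support_iff.mp hm, zero_smul])
  rw [hs (p + q) (p.support ∪ q.support) support_add, hs p _ Finset.subset_union_left,
    hs q _ Finset.subset_union_right, ← Finset.sum_add_distrib]
  simp only [coeff_add, add_smul]

noncomputable def matSubstHom : MvPolynomial (Fin k) R →+ Matrix (Fin n) (Fin n) R :=
  { toFun := fun p => matSubst p B
    map_zero' := matSubst_zero B
    map_add' := matSubst_add B }

lemma matSubst_sum {ι : Type*} (s : Finset ι) (f : ι → MvPolynomial (Fin k) R) :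
    matSubst (∑ x ∈ s, f x) B = ∑ x ∈ s, matSubst (f x) B :=
  map_sum (matSubstHom B) f s

lemma matSubst_monomial (m : Fin k →₀ ℕ) (r : R) :
    matSubst (monomial m r) B = r • Bpow B m := by
  classical
  rcases eq_or_ne r 0 with h | h
  · simp [h, matSubst_zero]
  · rw [matSubst_def, support_monomial, if_neg h, Finset.sum_singleton, coeff_monomial,
      if_pos rfl]

lemma matSubst_X_mul (hB : ∀ i j, B i * B j = B j * B i) (i : Fin k)
    (p : MvPolynomial (Fin k) R) :
    matSubst (X i * p) B = matSubst p B * B i := by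
  have hX : (X i : MvPolynomial (Fin k) R) = monomial (Finsupp.single i 1) 1 := rfl
  induction p using MvPolynomial.induction_on' with
  | monomial m r =>
    rw [hX, monomial_mul, one_mul, matSubst_monomial, matSubst_monomial,
      add_comm (Finsupp.single i 1) m, Bpow_add B hB, Bpow_single, smul_mul_assoc]
  | add p q hp hq =>
    rw [mul_add, matSubst_add, matSubst_add, hp, hq, add_mul]

lemma matSubst_C_mul (r : R) (p : MvPolynomial (Fin k) R) :
    matSubst (C r * p) B = r • matSubst p B := by
  induction p using MvPolynomial.induction_on' with
  | monomial m r' =>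
    rw [C_apply, monomial_mul, zero_add, matSubst_monomial, matSubst_monomial, smul_smul]
  | add p q hp hq =>
    rw [mul_add, matSubst_add, matSubst_add, hp, hq, smul_add]

lemma matSubst_commute (hB : ∀ i j, B i * B j = B j * B i) (i : Fin k)
    (p : MvPolynomial (Fin k) R) :
    matSubst p B * B i = B i * matSubst p B := by
  rw [matSubst_def, Finset.sum_mul, Finset.mul_sum]
  refine Finset.sum_congr rfl fun m _ => ?_
  rw [smul_mul_assoc, mul_smul_comm, (commute_Bpow B hB i m).eq]

lemma stdBasis_mul_eq_sum (a c : Fin n) (M : Matrix (Fin n) (Fin n) R) :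
    Matrix.single a c (1 : R) * M = ∑ b, Matrix.single a b (M c b) := by
  ext x y
  simp [Matrix.mul_apply, Matrix.single, Matrix.sum_apply, ite_and,
    Finset.sum_ite_eq, Finset.sum_ite_eq']

lemma one_eq_sum_std : (1 : Matrix (Fin n) (Fin n) R) = ∑ a, Matrix.single a a 1 := by
  ext x y
  by_cases h : x = y <;>
  simp [Matrix.one_apply, Matrix.single, Matrix.sum_apply, h, ite_and,
    Finset.sum_ite_eq, Finset.sum_ite_eq']

end Aux

/-- Phillips' multivariate Cayley–Hamilton theorem. -/
theorem phillips_theorem {R : Type*} [CommRing R] {n k : ℕ}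
    (A B : Fin k → Matrix (Fin n) (Fin n) R)
    (hB : ∀ i j, B i * B j = B j * B i)
    (hAB : ∑ i, A i * B i = 0) :
    matSubst (phillipsPoly A) B = 0 := by
  classical
  set p : MvPolynomial (Fin k) R := phillipsPoly A with hp
  set N : Matrix (Fin n) (Fin n) (MvPolynomial (Fin k) R) :=
    ∑ i, (X i : MvPolynomial (Fin k) R) • (A i).map C with hN
  have hdet : p = N.det := rfl
  have key : N.adjugate * N = p • (1 : Matrix (Fin n) (Fin n) (MvPolynomial (Fin k) R)) := by
    rw [hdet]; exact Matrix.adjugate_mul N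
  have hNentry : ∀ c b, N c b = ∑ i, (X i : MvPolynomial (Fin k) R) * C ((A i) c b) := by
    intro c b
    simp [hN, Matrix.sum_apply, Matrix.smul_apply, Matrix.map_apply, smul_eq_mul]
  have h1 : matSubst p B = ∑ a, ∑ b, Matrix.single a b (1 : R) *
      matSubst ((p • (1 : Matrix (Fin n) (Fin n) (MvPolynomial (Fin k) R))) a b) B := by
    have he : ∀ a b : Fin n, (p • (1 : Matrix (Fin n) (Fin n) (MvPolynomial (Fin k) R))) a b
        = if a = b then p else 0 := by
      intro a b
      by_cases h : a = b <;> simp [Matrix.smul_apply, Matrix.one_apply, h]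
    symm
    calc (∑ a, ∑ b, Matrix.single a b (1 : R) *
          matSubst ((p • (1 : Matrix (Fin n) (Fin n) (MvPolynomial (Fin k) R))) a b) B)
        = ∑ a, Matrix.single a a (1 : R) * matSubst p B := by
          refine Finset.sum_congr rfl fun a _ => ?_
          have hb : ∀ b, Matrix.single a b (1 : R) *
              matSubst ((p • (1 : Matrix (Fin n) (Fin n) (MvPolynomial (Fin k) R))) a b) B
              = if a = b then Matrix.single a a (1 : R) * matSubst p B else 0 := by
            intro b
            by_cases h : a = b
            · subst h; simp [he, matSubst_zero]
            · simp [he, h, matSubst_zero]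
          simp only [hb]
          simp
      _ = (∑ a, Matrix.single a a (1 : R)) * matSubst p B := (Finset.sum_mul _ _ _).symm
      _ = matSubst p B := by rw [← one_eq_sum_std, one_mul]
  have step : ∀ a b, Matrix.single a b (1 : R) * matSubst ((N.adjugate * N) a b) B
      = ∑ c, ∑ i, Matrix.single a b ((A i) c b) *
          (B i * matSubst (N.adjugate a c) B) := by
    intro a b
    rw [Matrix.mul_apply, matSubst_sum, Finset.mul_sum]
    refine Finset.sum_congr rfl fun c _ => ?_
    have hexp : N.adjugate a c * N c b = ∑ i, C ((A i) c b) * (X i * N.adjugate a c) := by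
      rw [hNentry c b, Finset.mul_sum]
      exact Finset.sum_congr rfl fun i _ => by ring
    rw [hexp, matSubst_sum, Finset.mul_sum]
    refine Finset.sum_congr rfl fun i _ => ?_
    rw [matSubst_C_mul, matSubst_X_mul B hB, matSubst_commute B hB,
      mul_smul_comm, ← smul_mul_assoc, Matrix.smul_single, smul_eq_mul, mul_one]
  have step2 : ∀ a, (∑ b, ∑ c, ∑ i, Matrix.single a b ((A i) c b) *
      (B i * matSubst (N.adjugate a c) B)) = 0 := by
    intro a
    rw [Finset.sum_comm]
    refine Finset.sum_eq_zero fun c _ => ?_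
    rw [Finset.sum_comm]
    have hi : ∀ i, (∑ b, Matrix.single a b ((A i) c b) *
        (B i * matSubst (N.adjugate a c) B))
        = Matrix.single a c (1 : R) * (A i * B i) * matSubst (N.adjugate a c) B := by
      intro i
      rw [← Finset.sum_mul, ← stdBasis_mul_eq_sum]
      simp only [mul_assoc]
    simp only [hi]
    rw [← Finset.sum_mul, ← Finset.mul_sum, hAB, mul_zero, zero_mul]
  rw [h1, ← key]
  simp only [step]
  exact Finset.sum_eq_zero fun a _ => step2 a
end

section
/- Let $A, B$ be commuting $n\times n$ matrices over a commutative ring. Define the bivariate polynomial $p_2(x,y) = \det(xA - yB)$. Then substituting $x = B$ and $y = A$ into $p_2$ yields the zero matrix, i.e. $p_2(B, A) = 0$. -/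
open MvPolynomial

/-- The bivariate polynomial `p₂(x,y) = det(xA - yB)`, with `x = X 0` and `y = X 1`. -/
noncomputable def pTwo {R : Type*} [CommRing R] {n : ℕ}
    (A B : Matrix (Fin n) (Fin n) R) : MvPolynomial (Fin 2) R :=
  Matrix.det
    ((MvPolynomial.X 0 : MvPolynomial (Fin 2) R) • A.map MvPolynomial.C
      - (MvPolynomial.X 1 : MvPolynomial (Fin 2) R) • B.map MvPolynomial.C)

/-- If `N` is a matrix over a commutative ring `T` whose entries are mapped by a ring hom `f`
to `A j i • B - B j i • A` for commuting matrices `A B`, then `f N.det = 0`. -/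
lemma det_aux {R : Type*} [CommRing R] {n : ℕ} (A B : Matrix (Fin n) (Fin n) R)
    (h : A * B = B * A) {T : Type*} [CommRing T] (f : T →+* Matrix (Fin n) (Fin n) R)
    (N : Matrix (Fin n) (Fin n) T)
    (hNc : ∀ i j, f (N i j) = A j i • B - B j i • A) :
    f N.det = 0 := by
  classical
  have hQP : ∀ j q, (∑ m, f (N.adjugate j m) * f (N m q))
      = if j = q then f N.det else 0 := by
    intro j q
    have hadj := congrFun (congrFun (Matrix.adjugate_mul N) j) q
    rw [Matrix.mul_apply] at hadj
    calc ∑ m, f (N.adjugate j m) * f (N m q)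
        = f (∑ m, N.adjugate j m * N m q) := by simp
      _ = f ((N.det • (1 : Matrix (Fin n) (Fin n) T)) j q) := by rw [hadj]
      _ = _ := by
            simp [Matrix.smul_apply, Matrix.one_apply, apply_ite f, smul_eq_mul]
  have hP : ∀ m t, (∑ q, (f (N m q)) t q) = 0 := by
    intro m t
    have hk := congrFun (congrFun h t) m
    simp only [Matrix.mul_apply] at hk
    simp only [hNc, Matrix.sub_apply, Matrix.smul_apply, smul_eq_mul]
    rw [Finset.sum_sub_distrib, sub_eq_zero]
    rw [Finset.sum_congr rfl fun q _ => mul_comm (A q m) (B t q),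
      Finset.sum_congr rfl fun q _ => mul_comm (B q m) (A t q)]
    exact hk.symm
  ext i j
  have e1 : f N.det i j = ∑ q, (if j = q then f N.det else 0) i q := by
    have hq : ∀ q, (if j = q then f N.det else 0) i q
        = if j = q then f N.det i q else 0 := fun q => by split <;> simp
    simp_rw [hq]
    rw [Finset.sum_ite_eq]
    simp
  rw [Matrix.zero_apply, e1]
  calc ∑ q, (if j = q then f N.det else 0) i q
      = ∑ q, (∑ m, f (N.adjugate j m) * f (N m q)) i q := by
        simp_rw [hQP]
    _ = ∑ q, ∑ m, ∑ t, f (N.adjugate j m) i t * f (N m q) t q := by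
        refine Finset.sum_congr rfl fun q _ => ?_
        rw [Matrix.sum_apply]
        exact Finset.sum_congr rfl fun m _ => by rw [Matrix.mul_apply]
    _ = ∑ m, ∑ t, f (N.adjugate j m) i t * ∑ q, f (N m q) t q := by
        rw [Finset.sum_comm]
        refine Finset.sum_congr rfl fun m _ => ?_
        rw [Finset.sum_comm]
        simp_rw [Finset.mul_sum]
    _ = 0 := by simp [hP]

lemma main_aux {R : Type*} [CommRing R] {n : ℕ} (A B : Matrix (Fin n) (Fin n) R)
    (h : A * B = B * A) {T : Type*} [CommRing T] [Algebra R T]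
    (f : T →ₐ[R] Matrix (Fin n) (Fin n) R) (a b : T) (hfa : f a = A) (hfb : f b = B) :
    (∑ m ∈ (pTwo A B).support, (pTwo A B).coeff m • (B ^ m 0 * A ^ m 1)) = 0 := by
  have step1 : (∑ m ∈ (pTwo A B).support, (pTwo A B).coeff m • (B ^ m 0 * A ^ m 1))
      = f (aeval ![b, a] (pTwo A B)) := by
    rw [aeval_def, eval₂_eq', map_sum]
    refine Finset.sum_congr rfl fun m _ => ?_
    rw [Fin.prod_univ_two]
    simp only [Matrix.cons_val_zero, Matrix.cons_val_one, Matrix.head_cons, map_mul, map_pow,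
      hfa, hfb, AlgHom.commutes]
    rw [← Algebra.smul_def]
  have step2 : aeval ![b, a] (pTwo A B)
      = (Matrix.of fun i j =>
          b * algebraMap R T (A j i) - a * algebraMap R T (B j i)).det := by
    rw [pTwo, ← Matrix.det_transpose, AlgHom.map_det]
    congr 1
    ext i j
    simp [Matrix.transpose_apply, Matrix.map_apply, Matrix.sub_apply,
      Matrix.smul_apply, smul_eq_mul, Algebra.algebraMap_eq_smul_one]
  rw [step1, step2]
  refine det_aux A B h f.toRingHom _ (fun i j => ?_)
  simp [map_sub, map_mul, hfa, hfb, AlgHom.commutes, Algebra.algebraMap_eq_smul_one,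
    mul_smul_comm]

/-- Corollary 1.2: for commuting matrices `A, B`, the bivariate polynomial
`p₂(x,y) = det(xA - yB)` satisfies `p₂(B,A) = 0`, where substitution replaces each
monomial `x^i y^j` by `B^i A^j` (well-defined since `A` and `B` commute). -/
theorem phillips_two_matrices {R : Type*} [CommRing R] {n : ℕ}
    (A B : Matrix (Fin n) (Fin n) R) (h : A * B = B * A) :
    (∑ m ∈ (pTwo A B).support, (pTwo A B).coeff m • (B ^ m 0 * A ^ m 1)) = 0 := by
  letI : CommRing (Algebra.adjoin R ({A, B} : Set (Matrix (Fin n) (Fin n) R))) :=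
    Algebra.adjoinCommRingOfComm R (by rintro x (rfl | rfl) y (rfl | rfl) <;> simp [h])
  exact main_aux A B h (Algebra.adjoin R ({A, B} : Set (Matrix (Fin n) (Fin n) R))).val
    ⟨A, Algebra.subset_adjoin (by simp)⟩ ⟨B, Algebra.subset_adjoin (by simp)⟩ rfl rfl
end

section
/- Let $(A_{i,j})_{i\in[n],j\in[k]}$ and $(B_{i,j})_{i\in[n],j\in[k]}$ be families of $n\times n$ matrices over a commutative ring containing $1/n!$, such that all the $B_{i,j}$ commute pairwise and $A_{i,1}B_{i,1} + \cdots + A_{i,k}B_{i,k} = 0$ for each $i \in [n]$. Define $\hat p((x_{i,j})) = \mathfrak{D}(A_{1,1}x_{1,1}+\cdots+A_{1,k}x_{1,k}, \dots, A_{n,1}x_{n,1}+\cdots+A_{n,k}x_{n,k})$. Then substituting $B_{i,j}$ for $x_{i,j}$ yields $\hat p((B_{i,j})) = 0$. -/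
open MvPolynomial

/-- The polynomial
`p̂((x_{i,j})) = 𝔇(A_{1,1}x_{1,1}+⋯+A_{1,k}x_{1,k}, …, A_{n,1}x_{n,1}+⋯+A_{n,k}x_{n,k})`,
where the mixed discriminant is
`𝔇(C₁,…,Cₙ) = (1/n!) ∑_{α ∈ Sₙ} ∑_{σ ∈ Sₙ} sgn(σ) ∏ᵢ (C_{α(σ i)})_{i, σ i}`. -/
noncomputable def mixedPhillipsPoly {R : Type*} [CommRing R] {n k : ℕ}
    [Invertible (n.factorial : R)]
    (A : Fin n → Fin k → Matrix (Fin n) (Fin n) R) :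
    MvPolynomial (Fin n × Fin k) R :=
  MvPolynomial.C (⅟(n.factorial : R)) *
    ∑ α : Equiv.Perm (Fin n), ∑ σ : Equiv.Perm (Fin n),
      ((Equiv.Perm.sign σ : ℤ) : MvPolynomial (Fin n × Fin k) R) *
        ∏ i : Fin n,
          ((∑ j : Fin k,
              (MvPolynomial.X (α (σ i), j) : MvPolynomial (Fin n × Fin k) R) •
                (A (α (σ i)) j).map MvPolynomial.C :
              Matrix (Fin n) (Fin n) (MvPolynomial (Fin n × Fin k) R)) i (σ i))

/-- Substitution of the pairwise commuting matrices `B i j` for the variables `x_{i,j}`: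
each monomial is replaced by the corresponding ordered product of powers of the `B i j`. -/
noncomputable def mixedSubst {R : Type*} [CommRing R] {n k : ℕ}
    (p : MvPolynomial (Fin n × Fin k) R) (B : Fin n → Fin k → Matrix (Fin n) (Fin n) R) :
    Matrix (Fin n) (Fin n) R :=
  ∑ m ∈ p.support, p.coeff m •
    (((List.finRange n).flatMap
        (fun i => (List.finRange k).map fun j => ((i, j) : Fin n × Fin k))).map
      fun v => B v.1 v.2 ^ m v).prod

lemma mdp_det_kernel {n : ℕ} {S T : Type*} [CommRing S] [Ring T] (f : S →+* T)
    (D : Matrix (Fin n) (Fin n) S) (v : Fin n → T)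
    (h : ∀ i, ∑ m, v m * f (D m i) = 0) (c : Fin n) : v c * f D.det = 0 := by
  have h1 : v c * f D.det = ∑ m, v m * f ((D.det • (1 : Matrix (Fin n) (Fin n) S)) m c) := by
    rw [Finset.sum_eq_single c]
    · simp [Matrix.smul_apply, Matrix.one_apply, smul_eq_mul]
    · intro m _ hm
      simp [Matrix.smul_apply, Matrix.one_apply, hm, smul_eq_mul]
    · simp
  rw [h1, ← Matrix.mul_adjugate]
  calc ∑ m, v m * f ((D * D.adjugate) m c)
      = ∑ i, (∑ m, v m * f (D m i)) * f (D.adjugate i c) := by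
        simp only [Matrix.mul_apply, map_sum, map_mul, Finset.mul_sum, Finset.sum_mul, mul_assoc]
        rw [Finset.sum_comm]
    _ = 0 := by simp [h]

lemma mdp_list_prod_eq {n k : ℕ} {M : Type*} [CommMonoid M] (f : Fin n × Fin k → M) :
    (((List.finRange n).flatMap
        (fun i => (List.finRange k).map fun j => ((i, j) : Fin n × Fin k))).map f).prod
      = ∏ v : Fin n × Fin k, f v := by
  rw [List.map_flatMap, List.flatMap, List.prod_flatten, List.map_map,
    Fintype.prod_prod_type, Fin.prod_univ_def]
  apply congrArg
  apply List.map_congr_left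
  intro i _
  simp only [Function.comp, List.map_map, Fin.prod_univ_def]
  rfl

lemma mdp_subst_eq {R : Type*} [CommRing R] {n k : ℕ} {S : Type*} [CommRing S] [Algebra R S]
    (f : S →ₐ[R] Matrix (Fin n) (Fin n) R) (b : Fin n × Fin k → S)
    (p : MvPolynomial (Fin n × Fin k) R) :
    mixedSubst p (fun i j => f (b (i, j))) = f (aeval b p) := by
  have haev : aeval b p = ∑ m ∈ p.support, p.coeff m • ∏ v : Fin n × Fin k, b v ^ m v := by
    rw [aeval_def, eval₂_eq']
    exact Finset.sum_congr rfl fun m _ => by rw [Algebra.smul_def]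
  rw [haev, map_sum, mixedSubst]
  refine Finset.sum_congr rfl fun m _ => ?_
  rw [map_smul]
  congr 1
  have h1 : (fun v : Fin n × Fin k => f (b (v.1, v.2)) ^ m v)
      = f ∘ (fun v : Fin n × Fin k => b v ^ m v) := by
    funext v
    simp [map_pow]
  rw [h1, ← List.map_map, List.prod_hom _ f,
    mdp_list_prod_eq (fun v : Fin n × Fin k => b v ^ m v)]

theorem mixed_disc_phillips_aux {R : Type*} [CommRing R] {n k : ℕ}
    [Invertible (n.factorial : R)] {S : Type*} [CommRing S] [Algebra R S]
    (A : Fin n → Fin k → Matrix (Fin n) (Fin n) R)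
    (f : S →ₐ[R] Matrix (Fin n) (Fin n) R) (b : Fin n × Fin k → S)
    (hAB : ∀ i, ∑ j, A i j * f (b (i, j)) = 0) :
    mixedSubst (mixedPhillipsPoly A) (fun i j => f (b (i, j))) = 0 := by
  classical
  rw [mdp_subst_eq]
  -- the matrices over S
  set N : Fin n → Matrix (Fin n) (Fin n) S :=
    fun l => Matrix.of fun i m => ∑ j, b (l, j) * algebraMap R S (A l j i m) with hN
  set D : Equiv.Perm (Fin n) → Matrix (Fin n) (Fin n) S :=
    fun β => Matrix.of fun m i => N (β i) i m with hD
  have hpoly : mixedPhillipsPoly A = MvPolynomial.C (⅟(n.factorial : R)) *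
      ∑ α : Equiv.Perm (Fin n), ∑ σ : Equiv.Perm (Fin n),
        ((Equiv.Perm.sign σ : ℤ) : MvPolynomial (Fin n × Fin k) R) *
          ∏ i : Fin n, ∑ j : Fin k,
            MvPolynomial.X (α (σ i), j) * MvPolynomial.C (A (α (σ i)) j i (σ i)) := by
    rw [mixedPhillipsPoly]
    simp only [Matrix.sum_apply, Matrix.smul_apply, Matrix.map_apply, smul_eq_mul]
  have haeval : aeval b (mixedPhillipsPoly A) =
      algebraMap R S (⅟(n.factorial : R)) *
        ∑ α : Equiv.Perm (Fin n), ∑ σ : Equiv.Perm (Fin n),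
          ((Equiv.Perm.sign σ : ℤ) : S) * ∏ i : Fin n, N (α (σ i)) i (σ i) := by
    rw [hpoly]
    simp only [map_mul, map_sum, map_prod, map_intCast, aeval_C, aeval_X, hN, Matrix.of_apply]
  have hre : ∑ α : Equiv.Perm (Fin n), ∑ σ : Equiv.Perm (Fin n),
      ((Equiv.Perm.sign σ : ℤ) : S) * ∏ i : Fin n, N (α (σ i)) i (σ i)
      = ∑ β : Equiv.Perm (Fin n), (D β).det := by
    rw [Finset.sum_comm]
    have step1 : ∀ σ : Equiv.Perm (Fin n),
        ∑ α : Equiv.Perm (Fin n), ((Equiv.Perm.sign σ : ℤ) : S) * ∏ i, N (α (σ i)) i (σ i)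
        = ∑ β : Equiv.Perm (Fin n), ((Equiv.Perm.sign σ : ℤ) : S) * ∏ i, N (β i) i (σ i) := by
      intro σ
      exact Fintype.sum_equiv (Equiv.mulRight σ) _ _ (fun α => by
        simp only [Equiv.coe_mulRight, Equiv.Perm.mul_apply])
    simp only [step1]
    rw [Finset.sum_comm]
    refine Finset.sum_congr rfl fun β _ => ?_
    rw [Matrix.det_apply']
    exact Finset.sum_congr rfl fun σ _ => by simp [hD]
  have hdet : ∀ β : Equiv.Perm (Fin n), f ((D β).det) = 0 := by
    intro β
    have hker : ∀ c : Fin n,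
        Matrix.single c c (1 : R) * f ((D β).det) = 0 := by
      intro c
      refine mdp_det_kernel f.toRingHom (D β) (fun m => Matrix.single c m (1 : R)) ?_ c
      intro i
      have hfN : ∀ m, f (N (β i) i m) = ∑ j, A (β i) j i m • f (b (β i, j)) := by
        intro m
        simp only [hN, Matrix.of_apply, map_sum, map_mul]
        exact Finset.sum_congr rfl fun j _ => by
          rw [AlgHom.commutes, ← Algebra.commutes, ← Algebra.smul_def]
      simp only [hD, Matrix.of_apply, AlgHom.toRingHom_eq_coe, RingHom.coe_coe, hfN]
      ext t u
      rw [Matrix.sum_apply]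
      by_cases ht : t = c
      · subst ht
        calc ∑ m, (Matrix.single t m (1:R) *
                (∑ j, A (β i) j i m • f (b (β i, j)))) t u
            = ∑ m, ∑ j, A (β i) j i m * (f (b (β i, j))) m u := by
              refine Finset.sum_congr rfl fun m _ => ?_
              rw [Matrix.single_mul_apply_same, one_mul, Matrix.sum_apply]
              exact Finset.sum_congr rfl fun j _ => by simp [Matrix.smul_apply]
          _ = ∑ j, (A (β i) j * f (b (β i, j))) i u := by
              rw [Finset.sum_comm]
              exact Finset.sum_congr rfl fun j _ => (Matrix.mul_apply).symm
          _ = 0 := by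
              rw [← Matrix.sum_apply (i := i) (j := u), hAB (β i)]
              simp
      · simp only [Matrix.single_mul_apply_of_ne (h := ht)]
        simp
    have h1 : (1 : Matrix (Fin n) (Fin n) R) * f ((D β).det) = 0 := by
      have hsum : (1 : Matrix (Fin n) (Fin n) R)
          = ∑ c : Fin n, Matrix.single c c (1 : R) := by
        ext t u
        rw [Matrix.sum_apply, Finset.sum_eq_single t
          (fun c _ hc => by simp [Matrix.single, hc]) (by simp)]
        simp [Matrix.single, Matrix.one_apply]
      rw [hsum, Finset.sum_mul]
      simp [hker]
    simpa using h1
  rw [haeval, hre, map_mul, map_sum]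
  simp [hdet]

/-- The Phillips-type generalization of the Bapat–Roy theorem (Theorem 1.4). -/
theorem mixed_disc_phillips {R : Type*} [CommRing R] {n k : ℕ}
    [Invertible (n.factorial : R)]
    (A B : Fin n → Fin k → Matrix (Fin n) (Fin n) R)
    (hB : ∀ i j i' j', B i j * B i' j' = B i' j' * B i j)
    (hAB : ∀ i, ∑ j, A i j * B i j = 0) :
    mixedSubst (mixedPhillipsPoly A) B = 0 := by
  classical
  set s : Set (Matrix (Fin n) (Fin n) R) := Set.range fun v : Fin n × Fin k => B v.1 v.2 with hs
  letI cRing : CommRing ↥(Algebra.adjoin R s) := Algebra.adjoinCommRingOfComm R (by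
    rintro a ⟨v, rfl⟩ b' ⟨w, rfl⟩
    exact hB _ _ _ _)
  letI alg2 : @Algebra R ↥(Algebra.adjoin R s) _
      (@CommSemiring.toSemiring _ (@CommRing.toCommSemiring _ cRing)) :=
    (Algebra.adjoin R s).algebra
  let f : ↥(Algebra.adjoin R s) →ₐ[R] Matrix (Fin n) (Fin n) R := (Algebra.adjoin R s).val
  let b : Fin n × Fin k → ↥(Algebra.adjoin R s) :=
    fun v => ⟨B v.1 v.2, Algebra.subset_adjoin ⟨v, rfl⟩⟩
  exact mixed_disc_phillips_aux A f b (fun i => hAB i)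
end

section
/- Let $A_1,\dots,A_k$ and $B_1,\dots,B_k$ be $n\times n$ matrices over a commutative ring, with the $B_i$ pairwise commuting and $A_1B_1+\cdots+A_kB_k=0$. Then for all $b,e\in[n]$: $\sum_{j=1}^n \sum_{\pi\in S_n} \mathrm{sgn}(\pi) \sum_{(\ell_1,\dots,\ell_n)\in[k]^n} (A_{\ell_s})_{s,j}\left(\prod_{r\neq s}(A_{\ell_r})_{r,\pi_r}\right)\left(B_{\ell_1}\cdots B_{\ell_n}\right)_{j,e} = 0$, where $s = \pi^{-1}(b)$ depends on $\pi$. (This is the statement that the total signed weight of the set $\mathcal{G}(b,e)$ of pathmaps is zero.) -/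
/-- Lemma 2.6: the total signed weight of the set `𝒢(b,e)` of pathmaps is zero.
Here, for each permutation `π`, `s = π⁻¹ b` is the position with `π s = b`. -/
theorem total_signed_weight_G {R : Type*} [CommRing R] {n k : ℕ}
    (A B : Fin k → Matrix (Fin n) (Fin n) R)
    (hB : ∀ i j, B i * B j = B j * B i)
    (hAB : ∑ i, A i * B i = 0) (b e : Fin n) :
    ∑ j : Fin n, ∑ π : Equiv.Perm (Fin n), ((Equiv.Perm.sign π : ℤ) : R) *
      ∑ ℓ : Fin n → Fin k,
        (A (ℓ (π⁻¹ b))) (π⁻¹ b) j *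
          (∏ r ∈ Finset.univ.erase (π⁻¹ b), (A (ℓ r)) r (π r)) *
          (((List.finRange n).map fun i => B (ℓ i)).prod j e) = 0 := by
  rw [Finset.sum_comm]
  refine Finset.sum_eq_zero fun π _ => ?_
  set s : Fin n := π⁻¹ b with hs
  rw [← Finset.mul_sum]
  refine mul_eq_zero_of_right _ ?_
  -- step A : pull `B (ℓ s)` out of the list product
  have key : ∀ ℓ : Fin n → Fin k,
      ((List.finRange n).map fun i => B (ℓ i)).prod
        = B (ℓ s) * (((List.finRange n).erase s).map fun i => B (ℓ i)).prod := by
    intro ℓ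
    have hmem : s ∈ List.finRange n := List.mem_finRange s
    have hperm : List.Perm (List.finRange n) (s :: (List.finRange n).erase s) :=
      List.perm_cons_erase hmem
    have hcomm : ((List.finRange n).map fun i => B (ℓ i)).Pairwise Commute := by
      rw [List.pairwise_map]
      exact List.pairwise_of_forall_mem_list fun a _ c _ => hB (ℓ a) (ℓ c)
    rw [(hperm.map fun i => B (ℓ i)).prod_eq' hcomm, List.map_cons, List.prod_cons]
  simp_rw [key]
  rw [Finset.sum_comm]
  -- step B : contract the sum over j into a matrix entry
  have step2 : ∀ ℓ : Fin n → Fin k,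
      ∑ j : Fin n, (A (ℓ s)) s j * (∏ r ∈ Finset.univ.erase s, (A (ℓ r)) r (π r)) *
        ((B (ℓ s) * (((List.finRange n).erase s).map fun i => B (ℓ i)).prod) j e)
      = (∏ r ∈ Finset.univ.erase s, (A (ℓ r)) r (π r)) *
        ((A (ℓ s) * (B (ℓ s) * (((List.finRange n).erase s).map fun i => B (ℓ i)).prod)) s e) := by
    intro ℓ
    rw [Matrix.mul_apply, Finset.mul_sum]
    exact Finset.sum_congr rfl fun j _ => by ring
  refine (Finset.sum_congr rfl fun ℓ _ => step2 ℓ).trans ?_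
  -- step C : split the sum over ℓ at s
  rw [← Equiv.sum_comp (Equiv.funSplitAt s (Fin k)).symm, Fintype.sum_prod_type,
    Finset.sum_comm]
  refine Finset.sum_eq_zero fun g _ => ?_
  have hvs : ∀ i : Fin k, (Equiv.funSplitAt s (Fin k)).symm (i, g) s = i := by
    intro i; simp [Equiv.funSplitAt_symm_apply]
  have hvr : ∀ (i : Fin k) (r : Fin n) (h : r ≠ s),
      (Equiv.funSplitAt s (Fin k)).symm (i, g) r = g ⟨r, h⟩ := by
    intro i r h; simp [Equiv.funSplitAt_symm_apply, h]
  -- closed forms independent of i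
  set Fg : Fin n → R := fun r => if h : r = s then 1 else (A (g ⟨r, h⟩)) r (π r) with hFg
  set G : Fin n → Matrix (Fin n) (Fin n) R :=
    fun r => if h : r = s then 1 else B (g ⟨r, h⟩) with hG
  have hC : ∀ i : Fin k,
      (∏ r ∈ Finset.univ.erase s, (A ((Equiv.funSplitAt s (Fin k)).symm (i, g) r)) r (π r)) = ∏ r ∈ Finset.univ.erase s, Fg r := by
    intro i
    refine Finset.prod_congr rfl fun r hr => ?_
    have h : r ≠ s := (Finset.mem_erase.mp hr).1
    rw [hvr i r h]; simp [hFg, h]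
  have hM : ∀ i : Fin k,
      (((List.finRange n).erase s).map fun r => B ((Equiv.funSplitAt s (Fin k)).symm (i, g) r)) = ((List.finRange n).erase s).map G := by
    intro i
    refine List.map_congr_left fun r hr => ?_
    have h : r ≠ s := ((List.nodup_finRange n).mem_erase_iff.mp hr).1
    rw [hvr i r h]; simp [hG, h]
  simp_rw [hC, hM, hvs]
  rw [← Finset.mul_sum]
  refine mul_eq_zero_of_right _ ?_
  have : ∑ i : Fin k, A i * (B i * (((List.finRange n).erase s).map G).prod)
      = (0 : Matrix (Fin n) (Fin n) R) := by
    calc ∑ i : Fin k, A i * (B i * (((List.finRange n).erase s).map G).prod)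
        = (∑ i : Fin k, A i * B i) * (((List.finRange n).erase s).map G).prod := by
          rw [Finset.sum_mul]; exact Finset.sum_congr rfl fun i _ => (Matrix.mul_assoc _ _ _).symm
      _ = 0 := by rw [hAB, Matrix.zero_mul]
  calc ∑ i : Fin k, (A i * (B i * (((List.finRange n).erase s).map G).prod)) s e
      = (∑ i : Fin k, A i * (B i * (((List.finRange n).erase s).map G).prod)) s e := by
        rw [Matrix.sum_apply]
    _ = 0 := by rw [this]; rfl
end

section
/- Let $A_1,\dots,A_k$ and $B_1,\dots,B_k$ be $n\times n$ matrices over a commutative ring, with the $B_i$ pairwise commuting and $A_1B_1+\cdots+A_kB_k=0$. Then for all $b,e\in[n]$: $\sum_{j\neq b} \sum_{\pi\in S_n} \mathrm{sgn}(\pi) \sum_{(\ell_1,\dots,\ell_n)\in[k]^n} (A_{\ell_s})_{s,j}\left(\prod_{r\neq s}(A_{\ell_r})_{r,\pi_r}\right)\left(B_{\ell_1}\cdots B_{\ell_n}\right)_{j,e} = 0$, where $s = \pi^{-1}(b)$. (This is the statement that the total signed weight of the set $\mathcal{H}(b,e)$ of pathmaps with repeated target is zero, proved via a sign-reversing weight-preserving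 involution swapping the two repeated targets.) -/
/-- Lemma 2.7: the total signed weight of the set `ℋ(b,e)` of pathmaps with repeated target is zero.
Here, for each permutation `π`, `s = π⁻¹ b` is the position with `π s = b`. -/
theorem total_signed_weight_H {R : Type*} [CommRing R] {n k : ℕ}
    (A B : Fin k → Matrix (Fin n) (Fin n) R)
    (hB : ∀ i j, B i * B j = B j * B i)
    (hAB : ∑ i, A i * B i = 0) (b e : Fin n) :
    ∑ j ∈ Finset.univ.erase b, ∑ π : Equiv.Perm (Fin n), ((Equiv.Perm.sign π : ℤ) : R) *
      ∑ ℓ : Fin n → Fin k,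
        (A (ℓ (π⁻¹ b))) (π⁻¹ b) j *
          (∏ r ∈ Finset.univ.erase (π⁻¹ b), (A (ℓ r)) r (π r)) *
          (((List.finRange n).map fun i => B (ℓ i)).prod j e) = 0 := by
  apply Finset.sum_eq_zero
  intro j hj
  have hjb : j ≠ b := Finset.ne_of_mem_erase hj
  set F : Equiv.Perm (Fin n) → R := fun π =>
    ((Equiv.Perm.sign π : ℤ) : R) *
      ∑ ℓ : Fin n → Fin k,
        (A (ℓ (π⁻¹ b))) (π⁻¹ b) j *
          (∏ r ∈ Finset.univ.erase (π⁻¹ b), (A (ℓ r)) r (π r)) *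
          (((List.finRange n).map fun i => B (ℓ i)).prod j e) with hF
  have key : ∀ π : Equiv.Perm (Fin n), F π + F (Equiv.swap b j * π) = 0 := by
    intro π
    set s : Fin n := π⁻¹ b with hs
    set t : Fin n := π⁻¹ j with ht
    have hπs : π s = b := Equiv.apply_symm_apply π b
    have hπt : π t = j := Equiv.apply_symm_apply π j
    have hst : s ≠ t := by
      intro h
      exact hjb (by rw [← hπt, ← h, hπs])
    have hinv : (Equiv.swap b j * π)⁻¹ b = t := by
      rw [mul_inv_rev, Equiv.Perm.mul_apply, Equiv.swap_inv, Equiv.swap_apply_left, ht]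
    have hsign : ((Equiv.Perm.sign (Equiv.swap b j * π) : ℤ) : R)
        = - ((Equiv.Perm.sign π : ℤ) : R) := by
      rw [Equiv.Perm.sign_mul, Equiv.Perm.sign_swap (Ne.symm hjb)]
      push_cast
      ring
    have hsum : ∀ ℓ : Fin n → Fin k,
        (A (ℓ ((Equiv.swap b j * π)⁻¹ b))) ((Equiv.swap b j * π)⁻¹ b) j *
          (∏ r ∈ Finset.univ.erase ((Equiv.swap b j * π)⁻¹ b),
            (A (ℓ r)) r ((Equiv.swap b j * π) r)) *
          (((List.finRange n).map fun i => B (ℓ i)).prod j e)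
        = (A (ℓ s)) s j * (∏ r ∈ Finset.univ.erase s, (A (ℓ r)) r (π r)) *
          (((List.finRange n).map fun i => B (ℓ i)).prod j e) := by
      intro ℓ
      rw [hinv]
      congr 1
      -- pull out element `s` from the product over `univ.erase t`,
      -- and element `t` from the product over `univ.erase s`
      have hsmem : s ∈ Finset.univ.erase t := Finset.mem_erase.2 ⟨hst, Finset.mem_univ _⟩
      have htmem : t ∈ Finset.univ.erase s := Finset.mem_erase.2 ⟨Ne.symm hst, Finset.mem_univ _⟩
      rw [← Finset.mul_prod_erase _ _ hsmem, ← Finset.mul_prod_erase _ _ htmem]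
      have h1 : (Equiv.swap b j * π) s = j := by
        rw [Equiv.Perm.mul_apply, hπs, Equiv.swap_apply_left]
      have h2 : ∀ r, r ≠ s → r ≠ t → (Equiv.swap b j * π) r = π r := by
        intro r hrs hrt
        rw [Equiv.Perm.mul_apply]
        apply Equiv.swap_apply_of_ne_of_ne
        · intro h; exact hrs (by rw [hs, ← h]; exact (Equiv.symm_apply_apply π r).symm)
        · intro h; exact hrt (by rw [ht, ← h]; exact (Equiv.symm_apply_apply π r).symm)
      have hprod : ∏ r ∈ (Finset.univ.erase t).erase s, (A (ℓ r)) r ((Equiv.swap b j * π) r)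
          = ∏ r ∈ (Finset.univ.erase s).erase t, (A (ℓ r)) r (π r) := by
        have hset : (Finset.univ.erase t).erase s = (Finset.univ.erase s).erase t := by
          ext x; simp [and_left_comm, and_comm]
        rw [hset]
        apply Finset.prod_congr rfl
        intro r hr
        rw [h2 r (Finset.ne_of_mem_erase (Finset.mem_of_mem_erase hr))
          (Finset.ne_of_mem_erase hr)]
      rw [h1, hπt, hprod]
      ring
    rw [hF]
    simp only
    rw [hsign, Finset.sum_congr rfl fun ℓ _ => hsum ℓ]
    ring
  apply Finset.sum_involution (fun π _ => Equiv.swap b j * π)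
  · intro π _; exact key π
  · intro π _ _
    intro h
    have : Equiv.swap b j = 1 := by
      have := congrArg (· * π⁻¹) h
      simpa [mul_assoc] using this
    exact Ne.symm hjb (Equiv.swap_eq_one_iff.1 this)
  · intro π _; exact Finset.mem_univ _
  · intro π _
    rw [← mul_assoc, Equiv.swap_mul_self, one_mul]
end

section
/- Let $M(x_1,\dots,x_k) = A_1x_1+\cdots+A_kx_k$ where $A_1,\dots,A_k$ are $n\times n$ matrices over a commutative ring $R$, and let $B_1,\dots,B_k$ be pairwise commuting $n\times n$ matrices over $R$ with $A_1B_1+\cdots+A_kB_k = 0$. Let $M^B_{i,j} = (A_1)_{i,j}B_1 + \cdots + (A_k)_{i,j}B_k$, and let $\det_B M[s|b] = (-1)^{s+b}\sum_{\sigma\in S_n,\,\sigma_s=b}\mathrm{sgn}(\sigma)\prod_{r\neq s} M^B_{r,\sigma_r}$ (product taken in increasing order of $r$; well-defined since the $M^B_{r,j}$ all commute). Then for all $b\in[n]$: $\sum_{s=1}^n (-1)^{s+b}\, M^B_{s,b}\, \det\nolimits_B M[s|b] = 0$. -/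
open Matrix


/-- The matrix `M^B_{i,j} = (A₁)_{i,j} B₁ + ⋯ + (A_k)_{i,j} B_k`. -/
noncomputable def MB {R : Type*} [CommRing R] {n k : ℕ}
    (A B : Fin k → Matrix (Fin n) (Fin n) R) (i j : Fin n) :
    Matrix (Fin n) (Fin n) R :=
  ∑ t : Fin k, (A t) i j • B t

/-- `det_B M[s|b] = (-1)^{s+b} ∑_{σ ∈ Sₙ, σ s = b} sgn(σ) ∏_{r ≠ s} M^B_{r,σ r}`,
the determinant of `M` with row `s` and column `b` deleted, with the `Bᵢ` substituted
for the `xᵢ`; the product is taken in increasing order of `r`. -/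
noncomputable def detB {R : Type*} [CommRing R] {n k : ℕ}
    (A B : Fin k → Matrix (Fin n) (Fin n) R) (s b : Fin n) :
    Matrix (Fin n) (Fin n) R :=
  (-1 : R) ^ ((s : ℕ) + (b : ℕ)) •
    ∑ σ ∈ Finset.univ.filter (fun σ : Equiv.Perm (Fin n) => σ s = b),
      ((Equiv.Perm.sign σ : ℤ) : R) •
        (((List.finRange n).filter (· ≠ s)).map fun r => MB A B r (σ r)).prod

set_option maxHeartbeats 1000000 in
set_option synthInstance.maxHeartbeats 400000 in
/-- The Laplace-type identity at the heart of Phillips' original proof: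
`∑_s (-1)^{s+b} M^B_{s,b} det_B M[s|b] = 0`. -/
theorem phillips_laplace {R : Type*} [CommRing R] {n k : ℕ}
    (A B : Fin k → Matrix (Fin n) (Fin n) R)
    (hB : ∀ i j, B i * B j = B j * B i)
    (hAB : ∑ i, A i * B i = 0) (b : Fin n) :
    ∑ s : Fin n, (-1 : R) ^ ((s : ℕ) + (b : ℕ)) • (MB A B s b * detB A B s b) = 0 := by
  classical
  set S := Algebra.adjoin R (Set.range B) with hSdef
  letI : CommRing S := Algebra.adjoinCommRingOfComm R
    (by rintro _ ⟨i, rfl⟩ _ ⟨j, rfl⟩; exact hB i j)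
  have hMB : ∀ i j, MB A B i j ∈ S := by
    intro i j
    apply Subalgebra.sum_mem
    intro t _
    exact Subalgebra.smul_mem _ (Algebra.subset_adjoin (Set.mem_range_self t)) _
  obtain ⟨N, hNval⟩ : ∃ N : Matrix (Fin n) (Fin n) ↥S,
      ∀ i j, (N i j : Matrix (Fin n) (Fin n) R) = MB A B i j :=
    ⟨Matrix.of (fun i j => ⟨MB A B i j, hMB i j⟩), fun i j => rfl⟩
  set ι : S →+* Matrix (Fin n) (Fin n) R := (Subalgebra.val S).toRingHom with hιdef
  have hι : ∀ x : S, ι x = (x : Matrix (Fin n) (Fin n) R) := fun _ => rfl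
  -- Step 1 : the LHS equals ι (det Nᵀ)
  have hlist : ∀ (s : Fin n) (σ : Equiv.Perm (Fin n)),
      (((List.finRange n).filter (· ≠ s)).map fun r => MB A B r (σ r)).prod
        = ι (∏ r ∈ Finset.univ.erase s, N r (σ r)) := by
    intro s σ
    have hnd : ((List.finRange n).filter (· ≠ s)).Nodup :=
      (List.nodup_finRange n).filter _
    have htf : ((List.finRange n).filter (· ≠ s)).toFinset = Finset.univ.erase s := by
      ext r
      simp [List.mem_filter, List.mem_toFinset, Finset.mem_erase, and_comm]
    calc (((List.finRange n).filter (· ≠ s)).map fun r => MB A B r (σ r)).prod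
        = (((List.finRange n).filter (· ≠ s)).map fun r => ι (N r (σ r))).prod := by
          congr 1
          apply List.map_congr_left
          intro r _
          rw [hι, hNval]
      _ = ((((List.finRange n).filter (· ≠ s)).map fun r => N r (σ r)).map ι).prod := by
          rw [List.map_map]; rfl
      _ = ι ((((List.finRange n).filter (· ≠ s)).map fun r => N r (σ r)).prod) := by
          rw [← _root_.map_list_prod]
      _ = ι (∏ r ∈ Finset.univ.erase s, N r (σ r)) := by
          rw [← htf, List.prod_toFinset _ hnd]
  have step1 : (∑ s : Fin n, (-1 : R) ^ ((s : ℕ) + (b : ℕ)) •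
      (MB A B s b * detB A B s b)) = ι ((Nᵀ).det) := by
    have hterm : ∀ s : Fin n,
        (-1 : R) ^ ((s : ℕ) + (b : ℕ)) • (MB A B s b * detB A B s b)
          = ∑ σ ∈ Finset.univ.filter (fun σ : Equiv.Perm (Fin n) => σ.symm b = s),
              ((Equiv.Perm.sign σ : ℤ) : R) • ι (∏ r : Fin n, N r (σ r)) := by
      intro s
      have hfilter : (Finset.univ.filter (fun σ : Equiv.Perm (Fin n) => σ s = b))
          = Finset.univ.filter (fun σ : Equiv.Perm (Fin n) => σ.symm b = s) := by
        apply Finset.filter_congr; intro σ _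
        constructor
        · intro h
          rw [← h, Equiv.symm_apply_apply]
        · intro h
          rw [← h, Equiv.apply_symm_apply]
      rw [detB, hfilter, mul_smul_comm, smul_smul, ← pow_add, ← two_mul, pow_mul,
        neg_one_sq, one_pow, one_smul, Finset.mul_sum]
      apply Finset.sum_congr rfl
      intro σ hσ
      have hσs : σ s = b := by
        have h2 := (Finset.mem_filter.mp hσ).2
        rw [← h2, Equiv.apply_symm_apply]
      rw [mul_smul_comm]
      congr 1
      rw [hlist s σ, ← hσs]
      have : MB A B s (σ s) = ι (N s (σ s)) := by rw [hι, hNval]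
      rw [this, ← _root_.map_mul, ← Finset.mul_prod_erase _ _ (Finset.mem_univ s)]
    rw [Finset.sum_congr rfl fun s _ => hterm s,
      Finset.sum_fiberwise (g := fun σ : Equiv.Perm (Fin n) => σ.symm b)
        (f := fun σ => ((Equiv.Perm.sign σ : ℤ) : R) • ι (∏ r : Fin n, N r (σ r)))]
    rw [Matrix.det_apply', _root_.map_sum]
    apply Finset.sum_congr rfl
    intro σ _
    rw [show (∏ i : Fin n, Nᵀ (σ i) i) = ∏ r : Fin n, N r (σ r) from
        Finset.prod_congr rfl fun r _ => rfl,
      _root_.map_mul, map_intCast, Int.cast_smul_eq_zsmul R, zsmul_eq_mul]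
  rw [step1]
  -- Step 2 : ι (det Nᵀ) = 0
  set Φ : Matrix (Fin n) (Fin n) S →+* Matrix (Fin n) (Fin n) (Matrix (Fin n) (Fin n) R) :=
    ι.mapMatrix with hΦdef
  set P : Matrix (Fin n) (Fin n) (Matrix (Fin n) (Fin n) R) :=
    fun m j => Matrix.single m j (1 : R) with hPdef
  have hrow : ∀ i c, ∑ t, ∑ j, A t i j * B t j c = 0 := by
    intro i c
    have := congrFun (congrFun hAB i) c
    simpa [Matrix.sum_apply, Matrix.mul_apply] using this
  have key0 : ∀ (i m : Fin n), ∑ j, Matrix.single m j (1:R) * MB A B i j = 0 := by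
    intro i m
    ext a c
    simp only [Matrix.sum_apply, Matrix.zero_apply]
    by_cases ham : m = a
    · subst ham
      have h1 : ∀ j, (Matrix.single m j (1:R) * MB A B i j) m c
          = (MB A B i j) j c := by
        intro j
        rw [Matrix.single_mul_apply_same, one_mul]
      rw [Finset.sum_congr rfl fun j _ => h1 j]
      have h2 : ∀ j : Fin n, (MB A B i j) j c = ∑ t, A t i j * B t j c := by
        intro j; simp [MB, Matrix.sum_apply]
      rw [Finset.sum_congr rfl fun j _ => h2 j, Finset.sum_comm]
      exact hrow i c
    · have h1 : ∀ j, (Matrix.single m j (1:R) * MB A B i j) a c = 0 := by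
        intro j
        exact Matrix.single_mul_apply_of_ne (c := (1:R)) m j a c (Ne.symm ham) (MB A B i j)
      simp [h1]
  have hPN : P * Φ Nᵀ = 0 := by
    ext m i
    have hmi : (P * Φ Nᵀ) m i = ∑ j, Matrix.single m j (1:R) * MB A B i j := by
      rw [Matrix.mul_apply]
      apply Finset.sum_congr rfl
      intro j _
      rw [hPdef, hΦdef]
      simp only [RingHom.mapMatrix_apply, Matrix.map_apply, Matrix.transpose_apply, hι, hNval]
    rw [Matrix.zero_apply, hmi, key0]
  have hadj : Φ Nᵀ * Φ ((Nᵀ).adjugate) = Φ ((Nᵀ).det • 1) := by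
    rw [← _root_.map_mul, Matrix.mul_adjugate]
  have hPzero : P * Φ ((Nᵀ).det • 1) = 0 := by
    rw [← hadj, ← mul_assoc, hPN, zero_mul]
  have hE : ∀ m i : Fin n, Matrix.single m i (1:R) * ι ((Nᵀ).det) = 0 := by
    intro m i
    have h := congrFun (congrFun hPzero m) i
    rw [Matrix.mul_apply] at h
    simp only [Matrix.mul_apply, Matrix.zero_apply, hPdef, hΦdef,
      RingHom.mapMatrix_apply, Matrix.map_apply] at h
    have hsum : ∀ x : Fin n, x ∈ Finset.univ → x ≠ i →
        Matrix.single m x (1:R) *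
          ι (((Nᵀ).det • (1 : Matrix (Fin n) (Fin n) ↥S)) x i) = 0 := by
      intro x _ hx
      rw [Matrix.smul_apply, Matrix.one_apply_ne hx, smul_zero, map_zero, mul_zero]
    rw [Finset.sum_eq_single i hsum (by simp)] at h
    rw [Matrix.smul_apply, Matrix.one_apply_eq, smul_eq_mul, mul_one] at h
    exact h
  ext i c
  have h := congrFun (congrFun (hE i i) i) c
  rw [Matrix.single_mul_apply_same, one_mul] at h
  simpa using h
end

section
/- Fix $n\geq 2$, $k\geq 1$ and $b,e\in[n]$. The number of pathmaps in $\mathcal{H}(b,e)$ equals $(n-1)\, n!\, k^n\, n^{n-1}$, i.e., $n-1$ times the cardinality of the set $\mathcal{A}(b,e)$ of pathmutations with endpoints $b,e$. Equivalently, the map $\phi:\mathcal{A}(b,e)\times[n]\to\mathcal{G}(b,e) = \mathcal{A}(b,e)\cup\mathcal{H}(b,e)$ defined in the paper is a bijection, and $\phi((\bar\pi,\bar q),b) = (\bar\pi,\bar q)$. -/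
/-- A pathmap in `ℋ(b,e)`: a decorated map `(σ, τ, ℓm)` together with a decorated path
`(q, ℓq)` such that `σ` is the identity or a single transposition, the image of `τ` is
`[n] \ {b}` (so exactly one value is repeated), for a repeated pair `i ≠ j` with
`τ i = τ j` the permutation `σ` is the identity or the swap of `i` and `j`, the path
starts at the repeated value (`q 0 = τ i`) and ends at `e`, and the labels of the map
are those of the path permuted by `σ` (so they match at all positions except possibly
at the repeated pair, where they are swapped exactly when `σ` is the swap). -/
def IsPathMapH (n k : ℕ) (b e : Fin n)
    (x : Equiv.Perm (Fin n) × (Fin n → Fin n) × (Fin n → Fin k) ×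
      (Fin (n + 1) → Fin n) × (Fin n → Fin k)) : Prop :=
  (x.1 = 1 ∨ x.1.IsSwap) ∧
  Finset.image x.2.1 Finset.univ = Finset.univ.erase b ∧
  (∀ i j, i ≠ j → x.2.1 i = x.2.1 j → (x.1 = 1 ∨ x.1 = Equiv.swap i j)) ∧
  (∀ i j, i ≠ j → x.2.1 i = x.2.1 j → x.2.2.2.1 0 = x.2.1 i) ∧
  x.2.2.2.1 (Fin.last n) = e ∧
  x.2.2.1 = x.2.2.2.2 ∘ x.1


open Finset Function

section Aux

variable {n k : ℕ}

/-- If the image of `τ` misses only `b` and `τ i = τ j` with `i ≠ j`,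
then `τ` is injective away from `j`. -/
lemma inj_off {b : Fin n} {τ : Fin n → Fin n}
    (hτ : Finset.image τ Finset.univ = Finset.univ.erase b)
    {i j : Fin n} (hij : i ≠ j) (hc : τ i = τ j) :
    ∀ x y : Fin n, x ≠ j → y ≠ j → τ x = τ y → x = y := by
  have himg : Finset.image τ (Finset.univ.erase j) = Finset.image τ Finset.univ := by
    apply Finset.Subset.antisymm (Finset.image_subset_image (Finset.erase_subset _ _))
    intro z hz
    rw [Finset.mem_image] at hz ⊢
    obtain ⟨w, _, hw⟩ := hz
    by_cases hwj : w = j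
    · exact ⟨i, Finset.mem_erase.2 ⟨hij, Finset.mem_univ i⟩, by rw [hc, ← hwj, hw]⟩
    · exact ⟨w, Finset.mem_erase.2 ⟨hwj, Finset.mem_univ w⟩, hw⟩
  have hcard : (Finset.image τ (Finset.univ.erase j)).card = (Finset.univ.erase j).card := by
    rw [himg, hτ, Finset.card_erase_of_mem (Finset.mem_univ b),
      Finset.card_erase_of_mem (Finset.mem_univ j)]
  have hinj := Finset.injOn_of_card_image_eq hcard
  intro x y hx hy hxy
  exact hinj (by simp [hx]) (by simp [hy]) hxy

/-- Any collision of `τ` coincides with the given one. -/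
lemma collision_eq {b : Fin n} {τ : Fin n → Fin n}
    (hτ : Finset.image τ Finset.univ = Finset.univ.erase b)
    {i j x y : Fin n} (hij : i ≠ j) (hc : τ i = τ j)
    (hxy : x ≠ y) (hcxy : τ x = τ y) :
    (x = i ∧ y = j) ∨ (x = j ∧ y = i) := by
  have hinj := inj_off hτ hij hc
  by_cases hxj : x = j
  · subst hxj
    have hyj : y ≠ x := hxy.symm
    have : i = y := hinj i y hij hyj (by rw [hc, hcxy])
    exact Or.inr ⟨rfl, this.symm⟩
  · by_cases hyj : y = j
    · subst hyj
      have : x = i := hinj x i hxj hij (by rw [hcxy, ← hc])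
      exact Or.inl ⟨this, rfl⟩
    · exact absurd (hinj x y hxj hyj hcxy) hxy

/-- Index set of the interior vertices of the path. -/
abbrev MidIdx (n : ℕ) := {t : Fin (n + 1) // t ≠ 0 ∧ t ≠ Fin.last n}

/-- Domain of the parametrizing bijection. -/
abbrev PhiDom (n k : ℕ) (b : Fin n) :=
  {p : Equiv.Perm (Fin n) × Fin n // p.2 ≠ p.1⁻¹ b} × (MidIdx n → Fin n) × (Fin n → Fin k)

/-- The parametrizing map. -/
def Phi (n k : ℕ) (b e : Fin n) (y : PhiDom n k b) :
    Equiv.Perm (Fin n) × (Fin n → Fin n) × (Fin n → Fin k) ×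
      (Fin (n + 1) → Fin n) × (Fin n → Fin k) :=
  ((if y.1.1.2 < y.1.1.1⁻¹ b then 1 else Equiv.swap y.1.1.2 (y.1.1.1⁻¹ b)),
    Function.update (⇑y.1.1.1) (y.1.1.1⁻¹ b) (y.1.1.1 y.1.1.2),
    y.2.2 ∘ ⇑(if y.1.1.2 < y.1.1.1⁻¹ b then (1 : Equiv.Perm (Fin n))
      else Equiv.swap y.1.1.2 (y.1.1.1⁻¹ b)),
    (fun t => if h0 : t = 0 then y.1.1.1 y.1.1.2
      else if hl : t = Fin.last n then e else y.2.1 ⟨t, h0, hl⟩),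
    y.2.2)

lemma last_ne_zero (hn : 2 ≤ n) : (Fin.last n) ≠ (0 : Fin (n + 1)) := by
  simp only [Ne, Fin.ext_iff, Fin.val_last, Fin.val_zero]
  omega

end Aux

section Main

variable {n k : ℕ}

lemma isPathMapH_Phi (hn : 2 ≤ n) (b e : Fin n) (y : PhiDom n k b) :
    IsPathMapH n k b e (Phi n k b e y) := by
  obtain ⟨⟨⟨f, m⟩, hm⟩, mid, ℓ⟩ := y
  simp only [ne_eq] at hm
  unfold IsPathMapH Phi
  dsimp only
  set m' := f⁻¹ b with hm'def
  have hfm' : f m' = b := f.apply_symm_apply b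
  have hfmb : f m ≠ b := fun h => hm (f.injective (h.trans hfm'.symm))
  set τ : Fin n → Fin n := Function.update (⇑f) m' (f m) with hτdef
  have hτm : τ m = f m := Function.update_of_ne hm _ _
  have hτm' : τ m' = f m := Function.update_self _ _ _
  have hτo : ∀ x, x ≠ m' → τ x = f x := fun x hx => Function.update_of_ne hx _ _
  have hcol : ∀ x y : Fin n, x ≠ y → τ x = τ y →
      (x = m ∧ y = m') ∨ (x = m' ∧ y = m) := by
    intro x y hxy h
    rcases eq_or_ne x m' with rfl | hx
    · right
      refine ⟨rfl, ?_⟩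
      rw [hτm', hτo y (Ne.symm hxy)] at h
      exact (f.injective h.symm)
    · rw [hτo x hx] at h
      rcases eq_or_ne y m' with rfl | hy
      · rw [hτm'] at h
        exact Or.inl ⟨f.injective h, rfl⟩
      · rw [hτo y hy] at h
        exact absurd (f.injective h) hxy
  refine ⟨?_, ?_, ?_, ?_, ?_, rfl⟩
  · by_cases h : m < m'
    · left; rw [if_pos h]
    · right; rw [if_neg h]
      exact ⟨m, m', hm, rfl⟩
  · ext z
    simp only [Finset.mem_image, Finset.mem_univ, true_and, Finset.mem_erase, and_true]
    constructor
    · rintro ⟨x, rfl⟩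
      rcases eq_or_ne x m' with rfl | hx
      · rw [hτm']; exact hfmb
      · rw [hτo x hx]
        intro h
        exact hx (f.injective (by rw [h, hfm']))
    · intro hz
      refine ⟨f⁻¹ z, ?_⟩
      have hne : f⁻¹ z ≠ m' := fun h => hz (by rw [← (show f (f⁻¹ z) = z from f.apply_symm_apply z), h, hfm'])
      rw [hτo _ hne, (show f (f⁻¹ z) = z from f.apply_symm_apply z)]
  · intro i j hij h
    have hres := hcol i j hij h
    by_cases hh : m < m'
    · left; rw [if_pos hh]
    · right
      rw [if_neg hh]
      rcases hres with ⟨hi, hj⟩ | ⟨hi, hj⟩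
      · rw [hi, hj]
      · rw [hi, hj]; exact Equiv.swap_comm _ _
  · intro i j hij h
    rw [dif_pos rfl]
    rcases hcol i j hij h with ⟨rfl, _⟩ | ⟨rfl, _⟩
    · exact hτm.symm
    · exact hτm'.symm
  · rw [dif_neg (last_ne_zero hn), dif_pos rfl]

end Main

section Inj

variable {n k : ℕ}

lemma Phi_injective (hn : 2 ≤ n) (b e : Fin n) :
    Function.Injective (Phi n k b e) := by
  rintro ⟨⟨⟨f, m⟩, hmf⟩, mid, ℓ⟩ ⟨⟨⟨g, p⟩, hpg⟩, mid', ℓ'⟩ h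
  simp only [ne_eq] at hmf hpg
  have him := (isPathMapH_Phi (k := k) hn b e ⟨⟨(f, m), hmf⟩, mid, ℓ⟩).2.1
  have hσ := congrArg Prod.fst h
  have hτ := congrArg (fun z => z.2.1) h
  have hq := congrArg (fun z => z.2.2.2.1) h
  have hℓ : ℓ = ℓ' := congrArg (fun z => z.2.2.2.2) h
  simp only [Phi] at hσ hτ hq him
  set m' := f⁻¹ b with hm'def
  set p' := g⁻¹ b with hp'def
  have hfm' : f m' = b := f.apply_symm_apply b
  have hgp' : g p' = b := g.apply_symm_apply b
  -- the common repeated value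
  have hv : f m = g p := by
    have := congrFun hq 0
    rwa [dif_pos rfl, dif_pos rfl] at this
  set τ : Fin n → Fin n := Function.update (⇑f) m' (f m) with hτdef
  have hτm : τ m = f m := Function.update_of_ne hmf _ _
  have hτm' : τ m' = f m := Function.update_self _ _ _
  have hτp : τ p = g p := by
    have := congrFun hτ p
    rw [Function.update_of_ne hpg] at this
    exact this
  have hτp' : τ p' = g p := by
    have := congrFun hτ p'
    rw [Function.update_self] at this
    exact this
  have hpair := collision_eq him hmf (hτm.trans hτm'.symm) hpg (hτp.trans hτp'.symm)
  -- rule out the crossed case using σ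
  have hkey : p = m ∧ p' = m' := by
    rcases hpair with hpp | ⟨hp1, hp2⟩
    · exact hpp
    · exfalso
      by_cases hlt : m < m'
      · rw [if_pos hlt] at hσ
        have : ¬ p < p' := by rw [hp1, hp2]; exact not_lt.2 hlt.le
        rw [if_neg this] at hσ
        exact hpg (Equiv.swap_eq_one_iff.1 hσ.symm)
      · rw [if_neg hlt] at hσ
        have hlt' : p < p' := by
          rw [hp1, hp2]
          exact lt_of_le_of_ne (not_lt.1 hlt) (Ne.symm hmf)
        rw [if_pos hlt'] at hσ
        exact hmf (Equiv.swap_eq_one_iff.1 hσ)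
  obtain ⟨hpm, hp'm'⟩ := hkey
  -- recover the permutations
  have hfg : f = g := by
    apply Equiv.ext
    intro x
    rcases eq_or_ne x m' with rfl | hx
    · rw [hfm', ← hp'm']
      exact hgp'.symm
    · have h1 := congrFun hτ x
      have h2 : τ x = f x := Function.update_of_ne hx _ _
      have hxp' : x ≠ p' := fun hh => hx (hp'm' ▸ hh)
      have h3 : Function.update (⇑g) p' (g p) x = g x := Function.update_of_ne hxp' _ _
      exact h2.symm.trans (h1.trans h3)
  have hmid : mid = mid' := by
    funext t
    have := congrFun hq t.1
    rw [dif_neg t.2.1, dif_neg t.2.2, dif_neg t.2.1, dif_neg t.2.2] at this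
    exact this
  subst hℓ hmid hfg hpm
  rfl

end Inj

section Surj

variable {n k : ℕ}

lemma Phi_surj_aux (hn : 2 ≤ n) (b e : Fin n)
    {x : Equiv.Perm (Fin n) × (Fin n → Fin n) × (Fin n → Fin k) ×
      (Fin (n + 1) → Fin n) × (Fin n → Fin k)}
    (hx : IsPathMapH n k b e x) {m m' : Fin n}
    (hmm : m ≠ m') (hττ : x.2.1 m = x.2.1 m')
    (hσ : x.1 = if m < m' then 1 else Equiv.swap m m') :
    ∃ y, Phi n k b e y = x := by
  obtain ⟨σ, τ, ℓm, q, ℓq⟩ := x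
  obtain ⟨h1, h2, h3, h4, h5, h6⟩ := hx
  dsimp only at h2 h3 h4 h5 h6 hττ hσ ⊢
  have hbτ : ∀ z, τ z ≠ b := by
    intro z hz
    have : b ∈ Finset.image τ Finset.univ := Finset.mem_image.2 ⟨z, Finset.mem_univ z, hz⟩
    rw [h2] at this
    exact (Finset.mem_erase.1 this).1 rfl
  have hio := inj_off h2 hmm hττ
  set g : Fin n → Fin n := Function.update τ m' b with hgdef
  have hgm' : g m' = b := Function.update_self _ _ _
  have hgo : ∀ z, z ≠ m' → g z = τ z := fun z hz => Function.update_of_ne hz _ _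
  have hginj : Function.Injective g := by
    intro a c hac
    by_cases ha : a = m'
    · by_cases hc : c = m'
      · rw [ha, hc]
      · rw [ha, hgm', hgo c hc] at hac
        exact absurd hac.symm (hbτ c)
    · by_cases hc : c = m'
      · rw [hc, hgm', hgo a ha] at hac
        exact absurd hac (hbτ a)
      · rw [hgo a ha, hgo c hc] at hac
        exact hio a c ha hc hac
  have hgbij : Function.Bijective g := Finite.injective_iff_bijective.1 hginj
  set f : Equiv.Perm (Fin n) := Equiv.ofBijective g hgbij with hfdef
  have hfapp : ∀ z, f z = g z := fun z => rfl
  have hfm' : f m' = b := hgm'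
  have hinv : f⁻¹ b = m' := by
    rw [Equiv.Perm.inv_def, Equiv.symm_apply_eq]
    exact hfm'.symm
  have hfm : f m = τ m := hgo m hmm
  have hmne : m ≠ f⁻¹ b := by rw [hinv]; exact hmm
  refine ⟨⟨⟨(f, m), hmne⟩, fun t => q t.1, ℓq⟩, ?_⟩
  have hq0 : q 0 = τ m := h4 m m' hmm hττ
  simp only [Phi, Prod.mk.injEq]
  refine ⟨?_, ?_, ?_, ?_⟩
  · rw [hinv]
    exact hσ.symm
  · rw [hinv, hfm]
    have : Function.update (⇑f) m' (τ m) = Function.update (Function.update τ m' b) m' (τ m) := rfl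
    rw [this, Function.update_idem, hττ, Function.update_eq_self]
  · rw [hinv, ← hσ]
    exact h6.symm
  · refine ⟨?_, trivial⟩
    funext t
    rcases eq_or_ne t 0 with rfl | ht0
    · rw [dif_pos rfl, hfm, hq0]
    · rw [dif_neg ht0]
      rcases eq_or_ne t (Fin.last n) with rfl | htl
      · rw [dif_pos rfl, h5]
      · rw [dif_neg htl]

end Surj

section Surj2

variable {n k : ℕ}

lemma Phi_surjective (hn : 2 ≤ n) (b e : Fin n)
    (x : Equiv.Perm (Fin n) × (Fin n → Fin n) × (Fin n → Fin k) ×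
      (Fin (n + 1) → Fin n) × (Fin n → Fin k))
    (hx : IsPathMapH n k b e x) : ∃ y, Phi n k b e y = x := by
  have hlt : (Finset.univ.erase b).card < (Finset.univ : Finset (Fin n)).card := by
    rw [Finset.card_erase_of_mem (Finset.mem_univ b)]
    have : 0 < (Finset.univ : Finset (Fin n)).card := by simp; omega
    omega
  obtain ⟨i, -, j, -, hne, hc⟩ :=
    Finset.exists_ne_map_eq_of_card_lt_of_maps_to hlt
      (fun z _ => by rw [← hx.2.1]; exact Finset.mem_image_of_mem _ (Finset.mem_univ z))
  rcases hx.2.2.1 i j hne hc with hσ1 | hσs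
  · rcases lt_or_gt_of_ne hne with hlt' | hgt
    · exact Phi_surj_aux hn b e hx hne hc (by rw [if_pos hlt']; exact hσ1)
    · exact Phi_surj_aux hn b e hx hne.symm hc.symm (by rw [if_pos hgt]; exact hσ1)
  · rcases lt_or_gt_of_ne hne with hlt' | hgt
    · refine Phi_surj_aux hn b e hx hne.symm hc.symm ?_
      rw [if_neg (not_lt.2 hlt'.le), hσs]
      exact Equiv.swap_comm _ _
    · exact Phi_surj_aux hn b e hx hne hc (by rw [if_neg (not_lt.2 hgt.le)]; exact hσs)

theorem card_pathmaps_Haux (hn : 2 ≤ n) (b e : Fin n) :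
    Nat.card {x // IsPathMapH n k b e x} =
      (n - 1) * n.factorial * k ^ n * n ^ (n - 1) := by
  have hbij : Function.Bijective
      (fun y : PhiDom n k b => (⟨Phi n k b e y, isPathMapH_Phi hn b e y⟩ :
        {x // IsPathMapH n k b e x})) := by
    constructor
    · intro y₁ y₂ hy
      exact Phi_injective hn b e (congrArg Subtype.val hy)
    · rintro ⟨x, hx⟩
      obtain ⟨y, hy⟩ := Phi_surjective hn b e x hx
      exact ⟨y, Subtype.ext hy⟩
  rw [← Nat.card_eq_of_bijective _ hbij, Nat.card_eq_fintype_card]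
  have e1 : PhiDom n k b ≃
      (Equiv.Perm (Fin n) × {c : Fin n // c ≠ b}) × (MidIdx n → Fin n) × (Fin n → Fin k) := by
    refine Equiv.prodCongr ?_ (Equiv.refl _)
    exact {
      toFun := fun p => (p.1.1, ⟨p.1.1 p.1.2,
        fun h => p.2 (by simpa using congrArg (⇑(p.1.1⁻¹)) h)⟩)
      invFun := fun q => ⟨(q.1, q.1⁻¹ q.2.1),
        fun h => q.2.2 ((q.1⁻¹).injective h)⟩
      left_inv := fun p => by
        apply Subtype.ext
        simp
      right_inv := fun q => by
        apply Prod.ext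
        · rfl
        · apply Subtype.ext
          simp }
  rw [Fintype.card_congr e1]
  have hmid : Fintype.card (MidIdx n) = n - 1 := by
    rw [Fintype.card_subtype]
    have hset : (Finset.univ.filter fun t : Fin (n + 1) => t ≠ 0 ∧ t ≠ Fin.last n) =
        Finset.univ \ {0, Fin.last n} := by
      ext t
      simp [and_comm]
    rw [hset, Finset.card_sdiff_of_subset (by simp)]
    have h2 : ({0, Fin.last n} : Finset (Fin (n + 1))).card = 2 := by
      rw [Finset.card_insert_of_notMem (by simp [Ne, (last_ne_zero hn).symm]),
        Finset.card_singleton]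
    rw [h2, Finset.card_univ, Fintype.card_fin]
    omega
  have hne : Fintype.card {c : Fin n // c ≠ b} = n - 1 := by
    simp [Fintype.card_subtype_compl]
  rw [Fintype.card_prod, Fintype.card_prod, Fintype.card_prod, Fintype.card_fun,
    Fintype.card_fun, Fintype.card_fin, Fintype.card_fin, Fintype.card_perm,
    Fintype.card_fin, hmid, hne]
  ring

end Surj2

/-- The number of pathmaps in `ℋ(b,e)` is `(n-1) n! kⁿ n^{n-1}`, i.e. `n - 1` times the
number of pathmutations in `𝒜(b,e)`. -/
theorem card_pathmaps_H (n k : ℕ) (hn : 2 ≤ n) (hk : 1 ≤ k) (b e : Fin n) :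
    Nat.card {x // IsPathMapH n k b e x} =
      (n - 1) * n.factorial * k ^ n * n ^ (n - 1) := by
  exact card_pathmaps_Haux hn b e
end
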